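/- Let H₁, H₂ be real Hilbert spaces, F : H₁ → ℝ twice differentiable, G convex, α > 0, δ > 0. Suppose ū satisfies F'(ū)v + αG'(ū;v) ≥ 0 for all v ∈ H₁, and for some u with v = u − ū and some θ ∈ [0,1] admissible in the Taylor formula: F''(ū)v² ≥ δ‖v‖², |[F''(ū+θv) − F''(ū)]v²| ≤ (δ/2)‖v‖². Then J(u) ≥ J(ū) + (δ/4)‖u − ū‖², where J = F + αG and the Taylor expansion J(u) − J(ū) ≥ F'(ū)v + αG'(ū;v) + ½F''(ū+θv)v² holds. -/
import Mathlib


/-- Quadratic growth estimate (5.19) in the proof of Theorem 5.3: if `ū` satisfies the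
first-order inequality, `F''(ū)v² ≥ δ‖v‖²` for `v = u − ū`, and for some `θ ∈ [0,1]`
admissible in the Taylor formula `|[F''(ū+θv) − F''(ū)]v²| ≤ (δ/2)‖v‖²`, then
`J(u) ≥ J(ū) + (δ/4)‖u − ū‖²` with `J = F + αG`. -/
theorem stmt13 {H₁ H₂ : Type*}
    [NormedAddCommGroup H₁] [InnerProductSpace ℝ H₁] [CompleteSpace H₁]
    [NormedAddCommGroup H₂] [InnerProductSpace ℝ H₂] [CompleteSpace H₂]
    (F G : H₁ → ℝ) (α δ : ℝ) (hα : 0 < α) (hδ : 0 < δ)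
    (F' : H₁ →L[ℝ] ℝ) (G' : H₁ → ℝ) (F'' : H₁ → H₁ → ℝ)
    (ubar u : H₁)
    (hfo : ∀ w : H₁, 0 ≤ F' w + α * G' w)
    (hδ2 : F'' ubar (u - ubar) ≥ δ * ‖u - ubar‖ ^ 2)
    (hTaylor : ∃ θ ∈ Set.Icc (0 : ℝ) 1,
      (|F'' (ubar + θ • (u - ubar)) (u - ubar) - F'' ubar (u - ubar)| ≤
        (δ / 2) * ‖u - ubar‖ ^ 2) ∧
      (F u + α * G u) - (F ubar + α * G ubar) ≥
        (F' (u - ubar) + α * G' (u - ubar)) +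
          (1 / 2) * F'' (ubar + θ • (u - ubar)) (u - ubar)) :
    F u + α * G u ≥ (F ubar + α * G ubar) + (δ / 4) * ‖u - ubar‖ ^ 2 := by
  obtain ⟨θ, hθ, hpert, hT⟩ := hTaylor
  have h1 := hfo (u - ubar)
  have h2 : F'' (ubar + θ • (u - ubar)) (u - ubar) ≥ (δ / 2) * ‖u - ubar‖ ^ 2 := by
    have := abs_le.mp hpert
    nlinarith
  nlinarith
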